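/- Let G=(V,E) be a finite simple graph on n vertices and let α be the cardinality of a maximum independent set of G. For any edge weight w:E→(0,∞) and vertex measure μ:V→(0,∞): α ≤ min_σ #{k∈{1,…,n} : L_k((G,σ))=0}, where the minimum is taken over all signatures σ:E→{+1,−1}. -/

import Mathlib

open Filter Topology Polynomial
open scoped Classical

noncomputable section

variable {V : Type} [Fintype V] [DecidableEq V]

/-- Sum of a (symmetric) summand over the unordered edges of `G`. -/
def sgEdgeSum (G : SimpleGraph V) (F : V → V → ℝ) : ℝ :=
  (∑ i : V, ∑ j : V, if G.Adj i j then F i j else 0) / 2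

/-- The Rayleigh quotient `R_p^σ` of the signed graph `p`-Laplacian with
edge weight `w`, signature `sgn`, vertex measure `μ` and potential `κ`. -/
def sgRayleigh (G : SimpleGraph V) (w sgn : V → V → ℝ) (μ κ : V → ℝ)
    (p : ℝ) (f : V → ℝ) : ℝ :=
  (sgEdgeSum G (fun i j => w i j * |f i - sgn i j * f j| ^ p) +
      ∑ i : V, κ i * |f i| ^ p) /
    ∑ i : V, μ i * |f i| ^ p

/-- The unit sphere `S_p` of `ℓ^p(μ)`. -/
def pSphere (μ : V → ℝ) (p : ℝ) : Set (V → ℝ) :=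
  {f | ∑ i : V, μ i * |f i| ^ p = 1}

/-- There is an odd continuous map from `B` into `ℝ^m ∖ {0}`. -/
def hasOddMapInto (B : Set (V → ℝ)) (m : ℕ) : Prop :=
  ∃ h : (V → ℝ) → (Fin m → ℝ),
    ContinuousOn h B ∧ (∀ x ∈ B, h x ≠ 0) ∧ (∀ x ∈ B, h (-x) = -(h x))

/-- The Krasnoselskii genus of `B` is at least `k`. -/
def genusGe (B : Set (V → ℝ)) (k : ℕ) : Prop :=
  ∀ m, m < k → ¬ hasOddMapInto B m

/-- The family `F_k(S_p)` of closed symmetric subsets of the sphere `S_p`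
with Krasnoselskii genus at least `k`. -/
def genusFamily (μ : V → ℝ) (p : ℝ) (k : ℕ) : Set (Set (V → ℝ)) :=
  {B | B ⊆ pSphere μ p ∧ IsClosed B ∧ (∀ x ∈ B, -x ∈ B) ∧ genusGe B k}

/-- The `k`-th variational eigenvalue `λ_k^{(p)}` of the signed graph `p`-Laplacian. -/
def varEig (G : SimpleGraph V) (w sgn : V → V → ℝ) (μ κ : V → ℝ)
    (p : ℝ) (k : ℕ) : ℝ :=
  sInf ((fun B => sSup (sgRayleigh G w sgn μ κ p '' B)) '' genusFamily μ p k)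

/-- The `k`-th smallest real root (1-indexed, counted with multiplicity) of the
characteristic polynomial of `A`; for a matrix with real spectrum this is the
`k`-th eigenvalue `λ_k(A)` in the ordering `λ_1 ≤ … ≤ λ_n`. -/
def eigval {m : Type} [Fintype m] [DecidableEq m] (A : Matrix m m ℝ) (k : ℕ) : ℝ :=
  (Multiset.sort A.charpoly.roots (· ≤ ·)).getD (k - 1) 0

/-- The normalized adjacency matrix `A^μ_{-Γ}` of the negation of the signed graph
`(H, sgn)` with edge weight `w` and vertex measure `μ`. -/
def negAdj (H : SimpleGraph V) (w sgn : V → V → ℝ) (μ : V → ℝ) : Matrix V V ℝ :=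
  fun i j => if H.Adj i j then -(sgn i j) * w i j / μ i else 0

/-- The normalized adjacency matrix `A^μ_{-Γ₀}` of the negation of the subgraph of
`(H, sgn)` with vertex set `s`, with restricted edge weight and vertex measure. -/
def negAdjSub (H : SimpleGraph V) (s : Finset V) (w sgn : V → V → ℝ) (μ : V → ℝ) :
    Matrix {x // x ∈ s} {x // x ∈ s} ℝ :=
  fun i j => if H.Adj ↑i ↑j then -(sgn ↑i ↑j) * w ↑i ↑j / μ ↑i else 0

/-- The subgraph of `G` induced on the vertex set `s`. -/
def inducedGraph (G : SimpleGraph V) (s : Finset V) : SimpleGraph {x // x ∈ s} where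
  Adj i j := G.Adj ↑i ↑j
  symm := ⟨fun _ _ h => G.adj_symm h⟩
  loopless := ⟨fun i h => G.loopless.irrefl ↑i h⟩

/-- `G` has an edge cover of cardinality `m`. -/
def edgeCoverCard {α : Type} (G : SimpleGraph α) (m : ℕ) : Prop :=
  ∃ C : Finset (Sym2 α), (C : Set (Sym2 α)) ⊆ G.edgeSet ∧
    (∀ v : α, ∃ e ∈ C, v ∈ e) ∧ C.card = m

set_option linter.unusedSectionVars false

namespace InertiaAux

variable {V : Type} [Fintype V] [DecidableEq V]

/-- weighted p-energy -/
def pN (μ : V → ℝ) (p : ℝ) (g : V → ℝ) : ℝ := ∑ i : V, μ i * |g i| ^ p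

lemma pN_cont (μ : V → ℝ) {p : ℝ} (hp : 0 < p) : Continuous (pN μ p) := by
  apply continuous_finset_sum
  intro i _
  apply Continuous.mul continuous_const
  rw [continuous_iff_continuousAt]
  intro g
  exact (Real.continuousAt_rpow_const _ _ (Or.inr hp.le)).comp
    ((continuous_abs.comp (continuous_apply i)).continuousAt)

lemma pN_pos {μ : V → ℝ} (hμ : ∀ i, 0 < μ i) {p : ℝ} {g : V → ℝ} (hg : g ≠ 0) :
    0 < pN μ p g := by
  obtain ⟨v, hv⟩ := Function.ne_iff.1 hg
  refine Finset.sum_pos' (fun i _ => ?_) ⟨v, Finset.mem_univ v, ?_⟩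
  · exact mul_nonneg (hμ i).le (Real.rpow_nonneg (abs_nonneg _) _)
  · exact mul_pos (hμ v) (Real.rpow_pos_of_pos (abs_pos.2 (by simpa using hv)) _)

lemma pN_neg (μ : V → ℝ) (p : ℝ) (g : V → ℝ) : pN μ p (-g) = pN μ p g := by
  simp [pN]

/-- normalization onto the p-sphere -/
def nu (μ : V → ℝ) (p : ℝ) (g : V → ℝ) : V → ℝ := (pN μ p g) ^ (-(1/p)) • g

lemma nu_neg (μ : V → ℝ) (p : ℝ) (g : V → ℝ) : nu μ p (-g) = -(nu μ p g) := by
  unfold nu; rw [pN_neg]; exact smul_neg _ _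

lemma nu_norm {μ : V → ℝ} (hμ : ∀ i, 0 < μ i) {p : ℝ} (hp : 0 < p) {g : V → ℝ} (hg : g ≠ 0) :
    ∑ i : V, μ i * |nu μ p g i| ^ p = 1 := by
  have hN := pN_pos hμ (p := p) hg
  have hc : (0:ℝ) < (pN μ p g) ^ (-(1/p)) := Real.rpow_pos_of_pos hN _
  have key : ∀ i, |nu μ p g i| ^ p = (pN μ p g)⁻¹ * |g i| ^ p := by
    intro i
    have h1 : |nu μ p g i| = (pN μ p g) ^ (-(1/p)) * |g i| := by
      show |(pN μ p g ^ (-(1/p)) • g) i| = _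
      rw [Pi.smul_apply, smul_eq_mul, abs_mul, abs_of_pos hc]
    have h2 : ((pN μ p g) ^ (-(1/p))) ^ p = (pN μ p g)⁻¹ := by
      rw [← Real.rpow_mul hN.le]
      have : -(1/p) * p = -(1:ℝ) := by field_simp
      rw [this, Real.rpow_neg hN.le, Real.rpow_one]
    rw [h1, Real.mul_rpow hc.le (abs_nonneg _), h2]
  have : ∑ i : V, μ i * |nu μ p g i| ^ p = (pN μ p g)⁻¹ * pN μ p g := by
    calc ∑ i : V, μ i * |nu μ p g i| ^ p
        = ∑ i : V, (pN μ p g)⁻¹ * (μ i * |g i| ^ p) :=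
          Finset.sum_congr rfl fun i _ => by rw [key i]; ring
      _ = (pN μ p g)⁻¹ * pN μ p g := by rw [← Finset.mul_sum]; rfl
  rw [this, inv_mul_cancel₀ hN.ne']

lemma nu_cont {μ : V → ℝ} (hμ : ∀ i, 0 < μ i) {p : ℝ} (hp : 0 < p) :
    ContinuousOn (nu μ p) {g : V → ℝ | g ≠ 0} := by
  show ContinuousOn (fun g : V → ℝ => (pN μ p g) ^ (-(1/p)) • id g) {g : V → ℝ | g ≠ 0}
  refine ContinuousOn.fun_smul ?_ continuousOn_id
  intro g hg
  apply ContinuousAt.continuousWithinAt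
  exact (Real.continuousAt_rpow_const _ _ (Or.inl (pN_pos hμ hg).ne')).comp
    (pN_cont μ hp).continuousAt


/-- the span sphere: p-sphere intersected with coordinates in `t` -/
def spanSet (t : Finset V) (μ : V → ℝ) (p : ℝ) : Set (V → ℝ) :=
  pSphere μ p ∩ {f | ∀ v ∉ t, f v = 0}

lemma nu_mem_spanSet {t : Finset V} {μ : V → ℝ} (hμ : ∀ i, 0 < μ i) {p : ℝ} (hp : 0 < p)
    {g : V → ℝ} (hsupp : ∀ v ∉ t, g v = 0) (hg : g ≠ 0) :
    nu μ p g ∈ spanSet t μ p := by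
  constructor
  · exact nu_norm hμ hp hg
  · intro v hv
    show (pN μ p g ^ (-(1/p)) • g) v = 0
    rw [Pi.smul_apply, hsupp v hv, smul_zero]

/-- the folded map -/
def tH (t : Finset V) (μ : V → ℝ) (p : ℝ) {m : ℕ} (h : (V → ℝ) → Fin m → ℝ)
    (g : V → ℝ) : Fin m → ℝ :=
  if (∀ v ∉ t, g v = 0) ∧ g ≠ 0 then h (nu μ p g) else 0

variable {t : Finset V} {μ : V → ℝ} {p : ℝ} {m : ℕ} {h : (V → ℝ) → Fin m → ℝ}

lemma tH_odd (hμ : ∀ i, 0 < μ i) (hp : 0 < p)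
    (hodd : ∀ x ∈ spanSet t μ p, h (-x) = -(h x)) (g : V → ℝ) :
    tH t μ p h (-g) = -(tH t μ p h g) := by
  by_cases hc : (∀ v ∉ t, g v = 0) ∧ g ≠ 0
  · have hc' : (∀ v ∉ t, (-g) v = 0) ∧ (-g) ≠ 0 :=
      ⟨fun v hv => by simp [hc.1 v hv], neg_ne_zero.2 hc.2⟩
    rw [tH, if_pos hc', tH, if_pos hc, nu_neg]
    exact hodd _ (nu_mem_spanSet hμ hp hc.1 hc.2)
  · have hc' : ¬((∀ v ∉ t, (-g) v = 0) ∧ (-g) ≠ 0) := by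
      intro h'
      refine hc ⟨fun v hv => ?_, fun h0 => h'.2 (by rw [h0, neg_zero])⟩
      have := h'.1 v hv
      simpa using this
    rw [tH, if_neg hc', tH, if_neg hc, neg_zero]

lemma tH_ne (hμ : ∀ i, 0 < μ i) (hp : 0 < p)
    (hne : ∀ x ∈ spanSet t μ p, h x ≠ 0) {g : V → ℝ}
    (hsupp : ∀ v ∉ t, g v = 0) (hg : g ≠ 0) : tH t μ p h g ≠ 0 := by
  rw [tH, if_pos ⟨hsupp, hg⟩]
  exact hne _ (nu_mem_spanSet hμ hp hsupp hg)

lemma tH_cont (hμ : ∀ i, 0 < μ i) (hp : 0 < p)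
    (hcont : ContinuousOn h (spanSet t μ p)) :
    ContinuousOn (tH t μ p h) ({f | ∀ v ∉ t, f v = 0} \ {0}) := by
  have h1 : ContinuousOn (fun g => h (nu μ p g)) ({f : V → ℝ | ∀ v ∉ t, f v = 0} \ {0}) := by
    refine hcont.comp ((nu_cont hμ hp).mono ?_) ?_
    · intro g hg
      simpa using hg.2
    · intro g hg
      exact nu_mem_spanSet hμ hp hg.1 (by simpa using hg.2)
  refine h1.congr fun g hg => ?_
  rw [tH, if_pos ⟨hg.1, by simpa using hg.2⟩]

/-- radial compression map -/
def Emap (H : (V → ℝ) → Fin m → ℝ) (x : V → ℝ) : Fin m → ℝ := ‖x‖ • (‖H x‖)⁻¹ • H x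

lemma Emap_odd {H : (V → ℝ) → Fin m → ℝ} (Hodd : ∀ f, H (-f) = -(H f)) (x : V → ℝ) :
    Emap H (-x) = -(Emap H x) := by
  rw [Emap, Emap, Hodd x, norm_neg, norm_neg, smul_neg, smul_neg]

lemma Emap_norm_le (H : (V → ℝ) → Fin m → ℝ) (x : V → ℝ) : ‖Emap H x‖ ≤ ‖x‖ := by
  rw [Emap, norm_smul, norm_smul, norm_norm, norm_inv, norm_norm]
  by_cases h0 : H x = 0
  · rw [h0, norm_zero, mul_zero, mul_zero]; exact norm_nonneg x
  · rw [inv_mul_cancel₀ (norm_ne_zero_iff.2 h0), mul_one]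

lemma Emap_ne {H : (V → ℝ) → Fin m → ℝ} {x : V → ℝ} (hx : x ≠ 0) (hH : H x ≠ 0) :
    Emap H x ≠ 0 :=
  smul_ne_zero (norm_ne_zero_iff.2 hx)
    (smul_ne_zero (inv_ne_zero (norm_ne_zero_iff.2 hH)) hH)

lemma Emap_cont {H : (V → ℝ) → Fin m → ℝ} {D : Set (V → ℝ)}
    (Hcont : ContinuousOn H (D \ {0})) (Hne : ∀ f ∈ D, f ≠ 0 → H f ≠ 0) :
    ContinuousOn (Emap H) D := by
  intro x hx
  by_cases hx0 : x = 0
  · subst hx0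
    have hE0 : Emap H 0 = 0 := by rw [Emap, norm_zero, zero_smul]
    have hT : Tendsto (Emap H) (𝓝[D] 0) (𝓝 0) := by
      refine squeeze_zero_norm (fun y => Emap_norm_le H y) ?_
      have h1 : Tendsto (fun y : V → ℝ => ‖y‖) (𝓝 0) (𝓝 ‖(0 : V → ℝ)‖) :=
        continuous_norm.tendsto 0
      simpa using h1.mono_left nhdsWithin_le_nhds
    simpa [ContinuousWithinAt, hE0] using hT
  · have hsub : ContinuousOn (Emap H) (D \ {0}) := by
      refine ContinuousOn.smul continuous_norm.continuousOn ?_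
      refine ContinuousOn.smul (ContinuousOn.inv₀ Hcont.norm ?_) Hcont
      intro y hy
      exact norm_ne_zero_iff.2 (Hne y hy.1 (by simpa using hy.2))
    refine (hsub x ⟨hx, by simpa using hx0⟩).mono_of_mem_nhdsWithin ?_
    rw [Set.diff_eq]
    exact inter_mem_nhdsWithin D (isOpen_compl_singleton.mem_nhds (by simpa using hx0))

section Phi
variable {m : ℕ} (ι : Fin (m + 1) → V)

/-- embed `Fin m → ℝ` into coordinates `ι ∘ castSucc` -/
def phi1 (ξ : Fin m → ℝ) : V → ℝ :=
  fun v => ∑ i : Fin m, if v = ι i.castSucc then ξ i else 0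

/-- embed `ℝ` into coordinate `ι last` -/
def phi2 (c : ℝ) : V → ℝ := fun v => if v = ι (Fin.last m) then c else 0

variable {ι}

lemma phi1_apply (hι : Function.Injective ι) (ξ : Fin m → ℝ) (i : Fin m) :
    phi1 ι ξ (ι i.castSucc) = ξ i := by
  rw [phi1, Finset.sum_eq_single i]
  · rw [if_pos rfl]
  · intro j _ hj
    rw [if_neg]
    intro hc
    exact hj (Fin.castSucc_inj.1 (hι hc)).symm
  · intro hmem
    exact absurd (Finset.mem_univ i) hmem

lemma phi1_last (hι : Function.Injective ι) (ξ : Fin m → ℝ) :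
    phi1 ι ξ (ι (Fin.last m)) = 0 := by
  rw [phi1]
  refine Finset.sum_eq_zero fun i _ => ?_
  rw [if_neg]
  intro hc
  exact (Fin.castSucc_lt_last i).ne' (hι hc)

lemma phi1_off {v : V} (hv : ∀ i : Fin (m + 1), v ≠ ι i) (ξ : Fin m → ℝ) :
    phi1 ι ξ v = 0 :=
  Finset.sum_eq_zero fun i _ => if_neg (hv i.castSucc)

lemma phi1_neg (ξ : Fin m → ℝ) : phi1 ι (-ξ) = -(phi1 ι ξ) := by
  funext v
  rw [Pi.neg_apply, phi1, phi1, ← Finset.sum_neg_distrib]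
  refine Finset.sum_congr rfl fun i _ => ?_
  split <;> simp

lemma phi2_last (c : ℝ) : phi2 ι c (ι (Fin.last m)) = c := if_pos rfl

lemma phi2_castSucc (hι : Function.Injective ι) (c : ℝ) (i : Fin m) :
    phi2 ι c (ι i.castSucc) = 0 := by
  rw [phi2, if_neg]
  intro hc
  exact (Fin.castSucc_lt_last i).ne (hι hc)

lemma phi2_off {v : V} (hv : ∀ i : Fin (m + 1), v ≠ ι i) (c : ℝ) : phi2 ι c v = 0 :=
  if_neg (hv (Fin.last m))

lemma phi2_neg (c : ℝ) : phi2 ι (-c) = -(phi2 ι c) := by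
  funext v
  rw [Pi.neg_apply, phi2, phi2]
  split <;> simp

lemma phi1_cont : Continuous (phi1 ι) := by
  refine continuous_pi fun v => ?_
  refine continuous_finset_sum _ fun i _ => ?_
  by_cases hc : v = ι i.castSucc
  · simp only [if_pos hc]
    exact continuous_apply i
  · simp only [if_neg hc]
    exact continuous_const

lemma phi2_cont : Continuous (phi2 ι) := by
  refine continuous_pi fun v => ?_
  by_cases hc : v = ι (Fin.last m)
  · simp only [phi2, if_pos hc]
    exact continuous_id
  · simp only [phi2, if_neg hc]
    exact continuous_const

end Phi

/-- delete coordinate `a` -/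
def res (a : V) (f : V → ℝ) : V → ℝ := fun v => if v = a then 0 else f v

lemma res_neg (a : V) (f : V → ℝ) : res a (-f) = -(res a f) := by
  funext v
  rw [Pi.neg_apply, res, res]
  split <;> simp

lemma res_eq_self {a : V} {f : V → ℝ} (hfa : f a = 0) : res a f = f := by
  funext v
  rw [res]
  split
  · rename_i hv
    rw [hv, hfa]
  · rfl

lemma res_cont (a : V) : Continuous (res a) := by
  refine continuous_pi fun v => ?_
  by_cases hc : v = a
  · simp only [res, if_pos hc]; exact continuous_const
  · simp only [res, if_neg hc]; exact continuous_apply v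

lemma step_lemma (hμ : ∀ i, 0 < μ i) (hp : 0 < p) (hm : m + 1 ≤ t.card)
    (hcont : ContinuousOn h (spanSet t μ p))
    (hne : ∀ x ∈ spanSet t μ p, h x ≠ 0)
    (hodd : ∀ x ∈ spanSet t μ p, h (-x) = -(h x))
    (s : Finset V) (a : V)
    (H : (V → ℝ) → Fin m → ℝ)
    (H1 : ∀ f, H (-f) = -(H f))
    (H2 : ContinuousOn H ({f | ∀ v ∉ s, f v = 0} \ {0}))
    (H3 : ∀ f : V → ℝ, (∀ v ∉ s, f v = 0) → f ≠ 0 → H f ≠ 0) :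
    ∃ H' : (V → ℝ) → Fin m → ℝ,
      (∀ f, H' (-f) = -(H' f)) ∧
      ContinuousOn H' ({f | ∀ v ∉ insert a s, f v = 0} \ {0}) ∧
      (∀ f : V → ℝ, (∀ v ∉ insert a s, f v = 0) → f ≠ 0 → H' f ≠ 0) := by
  -- the injection of `Fin (m+1)` into `t`
  set ι : Fin (m + 1) → V := fun i => (t.equivFin.symm (Fin.castLE hm i) : V) with hιdef
  have hι : Function.Injective ι := fun i j hij => by
    have h2 := t.equivFin.symm.injective (Subtype.coe_injective hij)
    exact Fin.castLE_injective hm h2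
  have hιt : ∀ i, ι i ∈ t := fun i => (t.equivFin.symm (Fin.castLE hm i)).2
  -- the suspension map
  set J : (V → ℝ) → (V → ℝ) :=
    fun f => phi1 ι (Emap H (res a f)) + phi2 ι (f a) with hJdef
  have Jsupp : ∀ (f : V → ℝ) (v : V), v ∉ t → J f v = 0 := by
    intro f v hv
    have hvι : ∀ i : Fin (m + 1), v ≠ ι i := fun i hvi => hv (hvi ▸ hιt i)
    rw [hJdef]
    show phi1 ι _ v + phi2 ι _ v = 0
    rw [phi1_off hvι, phi2_off hvι, add_zero]
  have Jodd : ∀ f, J (-f) = -(J f) := by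
    intro f
    rw [hJdef]
    show phi1 ι (Emap H (res a (-f))) + phi2 ι ((-f) a) = _
    rw [res_neg, Emap_odd H1, phi1_neg, Pi.neg_apply, phi2_neg]
    rw [neg_add]
  have Jne : ∀ f : V → ℝ, (∀ v ∉ insert a s, f v = 0) → f ≠ 0 → J f ≠ 0 := by
    intro f hsupp hf0
    by_cases hfa : f a = 0
    · have hres : res a f = f := res_eq_self hfa
      have hfD : ∀ v ∉ s, f v = 0 := by
        intro v hv
        by_cases hva : v = a
        · rw [hva]; exact hfa
        · exact hsupp v (by simp [Finset.mem_insert, hva, hv])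
      have hHf : H f ≠ 0 := H3 f hfD hf0
      have hEf : Emap H f ≠ 0 := Emap_ne hf0 hHf
      obtain ⟨i, hi⟩ := Function.ne_iff.1 hEf
      have : J f (ι i.castSucc) = Emap H f i := by
        show phi1 ι (Emap H (res a f)) _ + phi2 ι (f a) _ = _
        rw [hres, phi1_apply hι, phi2_castSucc hι, add_zero]
      exact Function.ne_iff.2 ⟨ι i.castSucc, by rw [this]; simpa using hi⟩
    · have : J f (ι (Fin.last m)) = f a := by
        show phi1 ι (Emap H (res a f)) _ + phi2 ι (f a) _ = _
        rw [phi1_last hι, phi2_last, zero_add]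
      exact Function.ne_iff.2 ⟨ι (Fin.last m), by rw [this]; simpa using hfa⟩
  have Jmaps : Set.MapsTo J ({f | ∀ v ∉ insert a s, f v = 0} \ {0})
      ({f | ∀ v ∉ t, f v = 0} \ {0}) := by
    intro f hf
    exact ⟨fun v hv => Jsupp f v hv, by
      simpa using Jne f hf.1 (by simpa using hf.2)⟩
  have Jcont : ContinuousOn J ({f | ∀ v ∉ insert a s, f v = 0} \ {0}) := by
    have hresmaps : Set.MapsTo (res a) ({f : V → ℝ | ∀ v ∉ insert a s, f v = 0} \ {0})
        {f : V → ℝ | ∀ v ∉ s, f v = 0} := by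
      intro f hf v hv
      rw [res]
      by_cases hva : v = a
      · rw [if_pos hva]
      · rw [if_neg hva]
        exact hf.1 v (by simp [Finset.mem_insert, hva, hv])
    have hc1 : ContinuousOn (fun f => phi1 ι (Emap H (res a f)))
        ({f : V → ℝ | ∀ v ∉ insert a s, f v = 0} \ {0}) :=
      phi1_cont.comp_continuousOn
        ((Emap_cont H2 (fun f hf hf0 => H3 f hf hf0)).comp (res_cont a).continuousOn hresmaps)
    have hc2 : ContinuousOn (fun f : V → ℝ => phi2 ι (f a))
        ({f : V → ℝ | ∀ v ∉ insert a s, f v = 0} \ {0}) :=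
      phi2_cont.comp_continuousOn (continuous_apply a).continuousOn
    exact hc1.add hc2
  refine ⟨fun f => tH t μ p h (J f), ?_, ?_, ?_⟩
  · intro f
    show tH t μ p h (J (-f)) = -(tH t μ p h (J f))
    rw [Jodd f]
    exact tH_odd hμ hp hodd (J f)
  · exact (tH_cont hμ hp hcont).comp Jcont Jmaps
  · intro f hsupp hf0
    exact tH_ne hμ hp hne (fun v hv => Jsupp f v hv) (Jne f hsupp hf0)

lemma exists_global (hμ : ∀ i, 0 < μ i) (hp : 0 < p) (hm : m + 1 ≤ t.card)
    (hcont : ContinuousOn h (spanSet t μ p))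
    (hne : ∀ x ∈ spanSet t μ p, h x ≠ 0)
    (hodd : ∀ x ∈ spanSet t μ p, h (-x) = -(h x)) :
    ∃ H : (V → ℝ) → Fin m → ℝ,
      (∀ f, H (-f) = -(H f)) ∧ ContinuousOn H {f : V → ℝ | f ≠ 0} ∧
      (∀ f : V → ℝ, f ≠ 0 → H f ≠ 0) := by
  have key : ∀ u : Finset V, ∃ H : (V → ℝ) → Fin m → ℝ,
      (∀ f, H (-f) = -(H f)) ∧
      ContinuousOn H ({f | ∀ v ∉ t ∪ u, f v = 0} \ {0}) ∧
      (∀ f : V → ℝ, (∀ v ∉ t ∪ u, f v = 0) → f ≠ 0 → H f ≠ 0) := by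
    intro u
    induction u using Finset.induction_on with
    | empty =>
        rw [Finset.union_empty]
        exact ⟨tH t μ p h, tH_odd hμ hp hodd, tH_cont hμ hp hcont,
          fun f hsupp hf0 => tH_ne hμ hp hne hsupp hf0⟩
    | @insert a u ha ih =>
        obtain ⟨H, H1, H2, H3⟩ := ih
        rw [Finset.union_insert]
        exact step_lemma hμ hp hm hcont hne hodd (t ∪ u) a H H1 H2 H3
  obtain ⟨H, H1, H2, H3⟩ := key Finset.univ
  have hvac : ∀ f : V → ℝ, ∀ v, v ∉ t ∪ Finset.univ → f v = 0 := by
    intro f v hv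
    exact absurd (Finset.mem_union_right _ (Finset.mem_univ v)) hv
  refine ⟨H, H1, H2.mono ?_, fun f hf0 => H3 f (hvac f) hf0⟩
  intro f hf
  exact ⟨hvac f, by simpa using hf⟩

section Bounds

variable {G : SimpleGraph V} {w sgn : V → V → ℝ} {μ κ : V → ℝ} {p : ℝ} {f : V → ℝ}

lemma mem_pSphere_term_le (hμ : ∀ i, 0 < μ i) (hf : f ∈ pSphere μ p) (i : V) :
    |f i| ^ p ≤ (μ i)⁻¹ := by
  have hsum : ∑ j : V, μ j * |f j| ^ p = 1 := hf
  have h1 : μ i * |f i| ^ p ≤ 1 := by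
    rw [← hsum]
    exact Finset.single_le_sum
      (fun j _ => mul_nonneg (hμ j).le (Real.rpow_nonneg (abs_nonneg _) _))
      (Finset.mem_univ i)
  have h2 := mul_le_mul_of_nonneg_left h1 (inv_nonneg.2 (hμ i).le)
  rwa [← mul_assoc, inv_mul_cancel₀ (hμ i).ne', one_mul, mul_one] at h2

lemma abs_le_pSphere (hμ : ∀ i, 0 < μ i) (hp : 0 < p) (hf : f ∈ pSphere μ p) (i : V) :
    |f i| ≤ ((μ i)⁻¹) ^ (1/p) := by
  have h0 : |f i| = (|f i| ^ p) ^ (1/p) := by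
    rw [← Real.rpow_mul (abs_nonneg _), mul_one_div, div_self hp.ne', Real.rpow_one]
  rw [h0]
  exact Real.rpow_le_rpow (Real.rpow_nonneg (abs_nonneg _) _)
    (mem_pSphere_term_le hμ hf i) (by positivity)

lemma edge_nonneg (hw : ∀ i j, G.Adj i j → 0 < w i j) (f : V → ℝ) :
    0 ≤ sgEdgeSum G (fun i j => w i j * |f i - sgn i j * f j| ^ p) := by
  unfold sgEdgeSum
  apply div_nonneg _ (by norm_num)
  refine Finset.sum_nonneg fun i _ => Finset.sum_nonneg fun j _ => ?_
  split_ifs with hA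
  · exact mul_nonneg (hw i j hA).le (Real.rpow_nonneg (abs_nonneg _) _)
  · exact le_refl 0

lemma kappa_lb (hμ : ∀ i, 0 < μ i) (hf : f ∈ pSphere μ p) :
    -(∑ i : V, |κ i| * (μ i)⁻¹) ≤ ∑ i : V, κ i * |f i| ^ p := by
  rw [← Finset.sum_neg_distrib]
  refine Finset.sum_le_sum fun i _ => ?_
  have ht := mem_pSphere_term_le hμ hf i
  have h3 : (0:ℝ) ≤ |f i| ^ p := Real.rpow_nonneg (abs_nonneg _) _
  have h4 : -(κ i) * |f i| ^ p ≤ |κ i| * (μ i)⁻¹ :=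
    mul_le_mul (neg_le_abs _) ht h3 (abs_nonneg _)
  linarith

lemma kappa_ub (hμ : ∀ i, 0 < μ i) (hf : f ∈ pSphere μ p) :
    ∑ i : V, κ i * |f i| ^ p ≤ ∑ i : V, |κ i| * (μ i)⁻¹ := by
  refine Finset.sum_le_sum fun i _ => ?_
  have ht := mem_pSphere_term_le hμ hf i
  have h3 : (0:ℝ) ≤ |f i| ^ p := Real.rpow_nonneg (abs_nonneg _) _
  exact mul_le_mul (le_abs_self _) ht h3 (abs_nonneg _)

lemma ray_eq (hf : f ∈ pSphere μ p) :
    sgRayleigh G w sgn μ κ p f =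
      sgEdgeSum G (fun i j => w i j * |f i - sgn i j * f j| ^ p) +
        ∑ i : V, κ i * |f i| ^ p := by
  have hden : ∑ i : V, μ i * |f i| ^ p = 1 := hf
  unfold sgRayleigh
  rw [hden, div_one]

lemma ray_lb (hμ : ∀ i, 0 < μ i) (hw : ∀ i j, G.Adj i j → 0 < w i j)
    (hf : f ∈ pSphere μ p) :
    -(∑ i : V, |κ i| * (μ i)⁻¹) ≤ sgRayleigh G w sgn μ κ p f := by
  rw [ray_eq hf]
  have h1 := edge_nonneg (sgn := sgn) (p := p) hw f
  have h2 := kappa_lb (κ := κ) hμ hf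
  linarith

lemma ray_ub (hμ : ∀ i, 0 < μ i) (hw : ∀ i j, G.Adj i j → 0 < w i j)
    (hsgn : ∀ i j, G.Adj i j → sgn i j = 1 ∨ sgn i j = -1) (hp : 0 < p)
    (hf : f ∈ pSphere μ p) :
    sgRayleigh G w sgn μ κ p f ≤
      (∑ i : V, ∑ j : V, if G.Adj i j then
          w i j * (((μ i)⁻¹ ^ (1/p)) + ((μ j)⁻¹ ^ (1/p))) ^ p else 0) / 2 +
        ∑ i : V, |κ i| * (μ i)⁻¹ := by
  rw [ray_eq hf]
  have h2 := kappa_ub (κ := κ) hμ hf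
  have h1 : sgEdgeSum G (fun i j => w i j * |f i - sgn i j * f j| ^ p) ≤
      (∑ i : V, ∑ j : V, if G.Adj i j then
          w i j * (((μ i)⁻¹ ^ (1/p)) + ((μ j)⁻¹ ^ (1/p))) ^ p else 0) / 2 := by
    unfold sgEdgeSum
    have hsum : (∑ i : V, ∑ j : V, if G.Adj i j then w i j * |f i - sgn i j * f j| ^ p else 0)
        ≤ ∑ i : V, ∑ j : V, if G.Adj i j then
            w i j * (((μ i)⁻¹ ^ (1/p)) + ((μ j)⁻¹ ^ (1/p))) ^ p else 0 := by
      refine Finset.sum_le_sum fun i _ => Finset.sum_le_sum fun j _ => ?_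
      split_ifs with hA
      · refine mul_le_mul_of_nonneg_left ?_ (hw i j hA).le
        refine Real.rpow_le_rpow (abs_nonneg _) ?_ hp.le
        have hs1 : |sgn i j| = 1 := by
          rcases hsgn i j hA with h1 | h1 <;> rw [h1] <;> norm_num
        calc |f i - sgn i j * f j| ≤ |f i| + |sgn i j * f j| := abs_sub _ _
          _ = |f i| + |f j| := by rw [abs_mul, hs1, one_mul]
          _ ≤ _ := add_le_add (abs_le_pSphere hμ hp hf i) (abs_le_pSphere hμ hp hf j)
      · exact le_refl 0
    linarith
  linarith

lemma ray_span {t : Finset V} (hμ : ∀ i, 0 < μ i) (hw : ∀ i j, G.Adj i j → 0 < w i j)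
    (hsgn : ∀ i j, G.Adj i j → sgn i j = 1 ∨ sgn i j = -1)
    (ht_ind : ∀ i ∈ t, ∀ j ∈ t, ¬ G.Adj i j)
    (hf : f ∈ spanSet t μ p) :
    sgRayleigh G w sgn μ κ p f ≤
      (∑ i : V, ∑ j : V, if G.Adj i j then w i j * ((μ i)⁻¹ + (μ j)⁻¹) else 0) / 2 +
        ∑ i : V, |κ i| * (μ i)⁻¹ := by
  rw [ray_eq hf.1]
  have h2 := kappa_ub (κ := κ) hμ hf.1
  have h1 : sgEdgeSum G (fun i j => w i j * |f i - sgn i j * f j| ^ p) ≤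
      (∑ i : V, ∑ j : V, if G.Adj i j then w i j * ((μ i)⁻¹ + (μ j)⁻¹) else 0) / 2 := by
    unfold sgEdgeSum
    have hsum : (∑ i : V, ∑ j : V, if G.Adj i j then w i j * |f i - sgn i j * f j| ^ p else 0)
        ≤ ∑ i : V, ∑ j : V, if G.Adj i j then w i j * ((μ i)⁻¹ + (μ j)⁻¹) else 0 := by
      refine Finset.sum_le_sum fun i _ => Finset.sum_le_sum fun j _ => ?_
      split_ifs with hA
      · refine mul_le_mul_of_nonneg_left ?_ (hw i j hA).le
        by_cases hit : i ∈ t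
        · have hjt : j ∉ t := fun hj => ht_ind i hit j hj hA
          rw [hf.2 j hjt, mul_zero, sub_zero]
          exact (mem_pSphere_term_le hμ hf.1 i).trans
            (le_add_of_nonneg_right (inv_nonneg.2 (hμ j).le))
        · have hs1 : |sgn i j| = 1 := by
            rcases hsgn i j hA with h1 | h1 <;> rw [h1] <;> norm_num
          rw [hf.2 i hit, zero_sub, abs_neg, abs_mul, hs1, one_mul]
          exact (mem_pSphere_term_le hμ hf.1 j).trans
            (le_add_of_nonneg_left (inv_nonneg.2 (hμ i).le))
      · exact le_refl 0
    linarith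
  linarith

lemma spanSet_closed (t : Finset V) (μ : V → ℝ) (hp : 0 < p) :
    IsClosed (spanSet t μ p) := by
  apply IsClosed.inter
  · have h1 : pSphere μ p = (pN μ p) ⁻¹' {1} := rfl
    rw [h1]
    exact IsClosed.preimage (pN_cont μ hp) isClosed_singleton
  · have h1 : {f : V → ℝ | ∀ v ∉ t, f v = 0} =
        ⋂ v : V, ⋂ (_ : v ∉ t), {f : V → ℝ | f v = 0} := by
      ext f; simp
    rw [h1]
    exact isClosed_iInter fun v => isClosed_iInter fun _ =>
      isClosed_eq (continuous_apply v) continuous_const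

lemma spanSet_symm {t : Finset V} {x : V → ℝ} (hx : x ∈ spanSet t μ p) :
    -x ∈ spanSet t μ p := by
  refine ⟨?_, fun v hv => by simp [hx.2 v hv]⟩
  have h1 : ∑ i : V, μ i * |x i| ^ p = 1 := hx.1
  show ∑ i : V, μ i * |(-x) i| ^ p = 1
  simpa using h1

lemma zero_not_mem_pSphere (μ : V → ℝ) (hp : 0 < p) : (0 : V → ℝ) ∉ pSphere μ p := by
  intro h0
  have h1 : ∑ i : V, μ i * |(0 : V → ℝ) i| ^ p = 1 := h0
  rw [Finset.sum_eq_zero (fun i _ => by simp [Real.zero_rpow hp.ne'])] at h1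
  exact zero_ne_one h1

lemma family_nonempty {k : ℕ} (hk : 1 ≤ k) {B : Set (V → ℝ)}
    (hB : B ∈ genusFamily μ p k) : B.Nonempty := by
  rcases Set.eq_empty_or_nonempty B with h0 | h0
  · exfalso
    refine hB.2.2.2 0 hk ⟨fun _ _ => 0, ?_, ?_, ?_⟩
    · rw [h0]; exact continuousOn_empty _
    · intro x hx; rw [h0] at hx; exact absurd hx (Set.notMem_empty x)
    · intro x hx; rw [h0] at hx; exact absurd hx (Set.notMem_empty x)
  · exact h0

end Bounds

end InertiaAux

/-- **Inertia bound for the independence number** (Theorem `thm:Inertia vertices`).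
For any edge weight and vertex measure, the cardinality `α` of a maximum independent
set satisfies `α ≤ #{k : L_k((G,σ)) = 0}` for every signature `σ`. -/
theorem independence_number_le_zero_cutoff_count
    {V : Type} [Fintype V] [DecidableEq V] (n : ℕ) (hn : Fintype.card V = n)
    (G : SimpleGraph V) (w : V → V → ℝ) (μ κ : V → ℝ)
    (hw : ∀ i j, G.Adj i j → 0 < w i j) (hwsymm : ∀ i j, w i j = w j i)
    (hμ : ∀ i, 0 < μ i)
    (α : ℕ)
    (hα : IsGreatest {m : ℕ | ∃ t : Finset V,
      (∀ i ∈ t, ∀ j ∈ t, ¬ G.Adj i j) ∧ t.card = m} α)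
    (L : (V → V → ℝ) → ℕ → ℝ)
    (hL : ∀ sgn : V → V → ℝ,
      (∀ i j, G.Adj i j → sgn i j = 1 ∨ sgn i j = -1) →
      (∀ i j, sgn i j = sgn j i) →
      ∀ k, 1 ≤ k → k ≤ n →
        Tendsto (fun p : ℝ => (2 : ℝ) ^ (-p) * varEig G w sgn μ κ p k) atTop
          (𝓝 (L sgn k))) :
    ∀ sgn : V → V → ℝ,
      (∀ i j, G.Adj i j → sgn i j = 1 ∨ sgn i j = -1) →
      (∀ i j, sgn i j = sgn j i) →
      α ≤ ((Finset.Icc 1 n).filter (fun k => L sgn k = 0)).card := by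
  intro sgn hsgn hsgnsymm
  classical
  obtain ⟨t, ht_ind, ht_card⟩ := hα.1
  have hαn : α ≤ n := by
    rw [← hn, ← ht_card]
    exact Finset.card_le_univ t
  have hC2 : (0:ℝ) ≤ ∑ i : V, |κ i| * (μ i)⁻¹ :=
    Finset.sum_nonneg fun i _ => mul_nonneg (abs_nonneg _) (inv_nonneg.2 (hμ i).le)
  have hAw : (0:ℝ) ≤ (∑ i : V, ∑ j : V,
      if G.Adj i j then w i j * ((μ i)⁻¹ + (μ j)⁻¹) else 0) / 2 := by
    apply div_nonneg _ (by norm_num)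
    refine Finset.sum_nonneg fun i _ => Finset.sum_nonneg fun j _ => ?_
    split_ifs with hA
    · exact mul_nonneg (hw i j hA).le
        (add_nonneg (inv_nonneg.2 (hμ i).le) (inv_nonneg.2 (hμ j).le))
    · exact le_refl 0
  have key : ∀ k, 1 ≤ k → k ≤ α → L sgn k = 0 := by
    intro k hk1 hkα
    have hlow : ∀ q : ℝ, 0 < q →
        -(∑ i : V, |κ i| * (μ i)⁻¹) ≤ varEig G w sgn μ κ q k := by
      intro q hq
      unfold varEig
      rcases Set.eq_empty_or_nonempty
          ((fun B => sSup (sgRayleigh G w sgn μ κ q '' B)) '' genusFamily μ q k) with he | hne'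
      · rw [he, Real.sInf_empty]
        exact neg_nonpos.2 hC2
      · refine le_csInf hne' ?_
        rintro b ⟨B, hB, rfl⟩
        obtain ⟨f₀, hf₀⟩ := InertiaAux.family_nonempty hk1 hB
        refine le_trans (InertiaAux.ray_lb hμ hw (hB.1 hf₀)) (le_csSup ?_ (Set.mem_image_of_mem _ hf₀))
        refine ⟨(∑ i : V, ∑ j : V, if G.Adj i j then
            w i j * (((μ i)⁻¹ ^ (1/q)) + ((μ j)⁻¹ ^ (1/q))) ^ q else 0) / 2 +
            ∑ i : V, |κ i| * (μ i)⁻¹, ?_⟩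
        rintro y ⟨f, hf, rfl⟩
        exact InertiaAux.ray_ub hμ hw hsgn hq (hB.1 hf)
    have hupp : ∀ q : ℝ, 0 < q → varEig G w sgn μ κ q k ≤
        (∑ i : V, ∑ j : V, if G.Adj i j then w i j * ((μ i)⁻¹ + (μ j)⁻¹) else 0) / 2 +
          ∑ i : V, |κ i| * (μ i)⁻¹ := by
      intro q hq
      by_cases hg : genusGe (InertiaAux.spanSet t μ q) k
      · have hmem : InertiaAux.spanSet t μ q ∈ genusFamily μ q k :=
          ⟨Set.inter_subset_left, InertiaAux.spanSet_closed t μ hq,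
            fun x hx => InertiaAux.spanSet_symm hx, hg⟩
        unfold varEig
        refine le_trans (csInf_le ?_ (Set.mem_image_of_mem _ hmem)) ?_
        · refine ⟨-(∑ i : V, |κ i| * (μ i)⁻¹), ?_⟩
          rintro b ⟨B, hB, rfl⟩
          obtain ⟨f₀, hf₀⟩ := InertiaAux.family_nonempty hk1 hB
          refine le_trans (InertiaAux.ray_lb hμ hw (hB.1 hf₀))
            (le_csSup ?_ (Set.mem_image_of_mem _ hf₀))
          refine ⟨(∑ i : V, ∑ j : V, if G.Adj i j then
              w i j * (((μ i)⁻¹ ^ (1/q)) + ((μ j)⁻¹ ^ (1/q))) ^ q else 0) / 2 +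
              ∑ i : V, |κ i| * (μ i)⁻¹, ?_⟩
          rintro y ⟨f, hf, rfl⟩
          exact InertiaAux.ray_ub hμ hw hsgn hq (hB.1 hf)
        · refine Real.sSup_le ?_ (add_nonneg hAw hC2)
          rintro y ⟨f, hf, rfl⟩
          exact InertiaAux.ray_span hμ hw hsgn ht_ind hf
      · unfold genusGe at hg
        push_neg at hg
        obtain ⟨m, hmk, hOdd⟩ := hg
        obtain ⟨h, hhc, hhne, hhodd⟩ := hOdd
        have hm : m + 1 ≤ t.card := by
          rw [ht_card]; omega
        obtain ⟨H, H1, H2, H3⟩ := InertiaAux.exists_global hμ hq hm hhc hhne hhodd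
        have hfam : genusFamily μ q k = ∅ := by
          rw [Set.eq_empty_iff_forall_notMem]
          intro B hB
          refine hB.2.2.2 m hmk ⟨H, H2.mono ?_, fun x hx => H3 x ?_, fun x _ => H1 x⟩
          · intro x hx
            exact fun h0 => InertiaAux.zero_not_mem_pSphere μ hq (h0 ▸ hB.1 hx)
          · exact fun h0 => InertiaAux.zero_not_mem_pSphere μ hq (h0 ▸ hB.1 hx)
        unfold varEig
        rw [hfam, Set.image_empty, Real.sInf_empty]
        exact add_nonneg hAw hC2
    have h2 : Tendsto (fun q : ℝ => (2:ℝ) ^ (-q)) atTop (𝓝 0) := by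
      have h3 : Tendsto (fun q : ℝ => Real.exp (Real.log 2 * -q)) atTop (𝓝 0) := by
        apply Real.tendsto_exp_atBot.comp
        exact (tendsto_neg_atTop_atBot (G := ℝ)).const_mul_atBot (Real.log_pos (by norm_num))
      refine h3.congr fun q => ?_
      rw [Real.rpow_def_of_pos (by norm_num : (0:ℝ) < 2)]
    have h0 : Tendsto (fun q : ℝ => (2:ℝ) ^ (-q) * varEig G w sgn μ κ q k) atTop (𝓝 0) := by
      refine tendsto_of_tendsto_of_tendsto_of_le_of_le'
        (g := fun q : ℝ => (2:ℝ) ^ (-q) * -(∑ i : V, |κ i| * (μ i)⁻¹))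
        (h := fun q : ℝ => (2:ℝ) ^ (-q) *
          ((∑ i : V, ∑ j : V, if G.Adj i j then w i j * ((μ i)⁻¹ + (μ j)⁻¹) else 0) / 2 +
            ∑ i : V, |κ i| * (μ i)⁻¹)) ?_ ?_ ?_ ?_
      · simpa using h2.mul_const (-(∑ i : V, |κ i| * (μ i)⁻¹))
      · simpa using h2.mul_const
          ((∑ i : V, ∑ j : V, if G.Adj i j then w i j * ((μ i)⁻¹ + (μ j)⁻¹) else 0) / 2 +
            ∑ i : V, |κ i| * (μ i)⁻¹)
      · filter_upwards [eventually_gt_atTop (0:ℝ)] with q hq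
        exact mul_le_mul_of_nonneg_left (hlow q hq) (Real.rpow_nonneg (by norm_num) _)
      · filter_upwards [eventually_gt_atTop (0:ℝ)] with q hq
        exact mul_le_mul_of_nonneg_left (hupp q hq) (Real.rpow_nonneg (by norm_num) _)
    exact tendsto_nhds_unique (hL sgn hsgn hsgnsymm k hk1 (hkα.trans hαn)) h0
  have hsubset : Finset.Icc 1 α ⊆ (Finset.Icc 1 n).filter fun k => L sgn k = 0 := by
    intro k hk
    rw [Finset.mem_Icc] at hk
    rw [Finset.mem_filter, Finset.mem_Icc]
    exact ⟨⟨hk.1, hk.2.trans hαn⟩, key k hk.1 hk.2⟩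
  calc α = (Finset.Icc 1 α).card := by rw [Nat.card_Icc]; omega
    _ ≤ _ := Finset.card_le_card hsubset
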